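/- Let m and w be independent square-integrable real random variables on a probability space (Ω, ℱ, ℙ) with 𝔼[m] = 0, and fix reals a ≤ 1/2, b, and ρ > 0. For each measurable encoder γ : ℝ → ℝ with γ(m) square-integrable, set y = γ(m) + w, u_γ = 𝔼[m | σ(y)], and J(γ) = 𝔼[(a·m − b − u_γ)²] + ρ·𝔼[γ(m)²]. Then the zero encoder γ₀ ≡ 0 satisfies J(γ₀) ≤ J(γ) for every such γ, with u_{γ₀} = 0 almost surely; that is, when a ≤ 1/2 the unique equilibrium outcome is non-informative with zero transmission power. -/

import Mathlib

open MeasureTheory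

section Helpers

variable {α : Type*} {m0 : MeasurableSpace α} {μ : Measure α}

lemma aux_integrable_mul_L2 {f g : α → ℝ} (hf : MemLp f 2 μ) (hg : MemLp g 2 μ) :
    Integrable (fun ω => f ω * g ω) μ := by
  have h := (hf.integrable_sq.add hg.integrable_sq).const_mul (1/2 : ℝ)
  refine h.mono' (hf.aestronglyMeasurable.mul hg.aestronglyMeasurable) ?_
  refine Filter.Eventually.of_forall fun ω => ?_
  have : ‖f ω * g ω‖ = |f ω| * |g ω| := by rw [Real.norm_eq_abs, abs_mul]
  rw [this]
  simp only [Pi.add_apply]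
  nlinarith [sq_nonneg (|f ω| - |g ω|), sq_abs (f ω), sq_abs (g ω)]

lemma aux_memℒp_two_condexp [IsFiniteMeasure μ] (y : α → ℝ) (hy : Measurable y)
    {f : α → ℝ} (hf : MemLp f 2 μ) :
    MemLp (μ[f|MeasurableSpace.comap y inferInstance]) 2 μ := by
  have hle : MeasurableSpace.comap y inferInstance ≤ m0 := hy.comap_le
  have hint : Integrable f μ := hf.integrable one_le_two
  set g : Lp ℝ 2 μ := hf.toLp f with hg
  have hcond : (condExpL2 ℝ ℝ hle g : α → ℝ) =ᵐ[μ] μ[f|MeasurableSpace.comap y inferInstance] := by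
    refine ae_eq_condExp_of_forall_setIntegral_eq hle hint ?_ ?_ ?_
    · intro s hs hμs
      exact integrableOn_condExpL2_of_measure_ne_top hle hμs.ne _
    · intro s hs hμs
      rw [integral_condExpL2_eq hle g hs hμs.ne]
      exact setIntegral_congr_ae (hle s hs) ((hf.coeFn_toLp).mono fun x hx _ => hx)
    · exact aestronglyMeasurable_condExpL2 hle g
  exact (Lp.memLp _).ae_eq hcond

end Helpers

theorem stmt_13 {Ω : Type*} {F : MeasurableSpace Ω} {μ : Measure Ω} [IsProbabilityMeasure μ]
    (m w : Ω → ℝ) (hm : Measurable m) (hw : Measurable w)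
    (hm2 : MemLp m 2 μ) (hw2 : MemLp w 2 μ)
    (hindep : ProbabilityTheory.IndepFun m w μ) (hmean : ∫ ω, m ω ∂μ = 0)
    (a b ρ : ℝ) (ha : a ≤ 1 / 2) (hρ : 0 < ρ) :
    (∀ γ : ℝ → ℝ, Measurable γ → MemLp (fun ω => γ (m ω)) 2 μ →
      (∫ ω, (a * m ω - b -
          (μ[m | MeasurableSpace.comap (fun ω => (0 : ℝ) + w ω) inferInstance]) ω) ^ 2 ∂μ)
        + ρ * ∫ ω, ((0 : ℝ)) ^ 2 ∂μ
      ≤ (∫ ω, (a * m ω - b -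
          (μ[m | MeasurableSpace.comap (fun ω => γ (m ω) + w ω) inferInstance]) ω) ^ 2 ∂μ)
        + ρ * ∫ ω, (γ (m ω)) ^ 2 ∂μ) ∧
    (μ[m | MeasurableSpace.comap (fun ω => (0 : ℝ) + w ω) inferInstance])
      =ᵐ[μ] (fun _ => (0 : ℝ)) := by
  have h0w : (fun ω => (0 : ℝ) + w ω) = w := by funext ω; rw [zero_add]
  have hmint : Integrable m μ := hm2.integrable one_le_two
  -- Part 2: non-informativeness
  have hB : (μ[m | MeasurableSpace.comap (fun ω => (0 : ℝ) + w ω) inferInstance])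
      =ᵐ[μ] (fun _ => (0 : ℝ)) := by
    rw [h0w]
    have hsm : StronglyMeasurable[MeasurableSpace.comap m inferInstance] m :=
      (Measurable.of_comap_le le_rfl).stronglyMeasurable
    have hind : ProbabilityTheory.Indep (MeasurableSpace.comap m inferInstance)
        (MeasurableSpace.comap w inferInstance) μ :=
      (ProbabilityTheory.IndepFun_iff_Indep m w μ).1 hindep
    have := MeasureTheory.condExp_indep_eq (μ := μ) hm.comap_le hw.comap_le hsm hind
    refine this.trans ?_
    simp [hmean]
  refine ⟨fun γ hγ hγ2 => ?_, hB⟩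
  -- rewrite LHS
  have hL1 : (∫ ω, (a * m ω - b -
      (μ[m | MeasurableSpace.comap (fun ω => (0 : ℝ) + w ω) inferInstance]) ω) ^ 2 ∂μ)
      = ∫ ω, (a * m ω - b) ^ 2 ∂μ := by
    refine integral_congr_ae ?_
    filter_upwards [hB] with ω hω
    rw [hω, sub_zero]
  set my : MeasurableSpace Ω :=
    MeasurableSpace.comap (fun ω => γ (m ω) + w ω) inferInstance with hmy
  have hle : my ≤ F := ((hγ.comp hm).add hw).comap_le
  set u : Ω → ℝ := μ[m | my] with hu
  have hu2 : MemLp u 2 μ := by rw [hu, hmy]; exact aux_memℒp_two_condexp _ ((hγ.comp hm).add hw) hm2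
  have huint : Integrable u μ := integrable_condExp
  have hX2 : MemLp (fun ω => a * m ω - b) 2 μ := (hm2.const_mul a).sub (memLp_const b)
  have hIX2 : Integrable (fun ω => (a * m ω - b) ^ 2) μ := hX2.integrable_sq
  have hIXu : Integrable (fun ω => (a * m ω - b) * u ω) μ := aux_integrable_mul_L2 hX2 hu2
  have hIu2 : Integrable (fun ω => u ω ^ 2) μ := hu2.integrable_sq
  have hImu : Integrable (fun ω => u ω * m ω) μ := aux_integrable_mul_L2 hu2 hm2
  -- E[u] = 0
  have hEu : ∫ ω, u ω ∂μ = 0 := by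
    rw [hu, integral_condExp hle, hmean]
  -- E[u*m] = E[u^2]
  have hEmu : ∫ ω, u ω * m ω ∂μ = ∫ ω, u ω ^ 2 ∂μ := by
    have h1 : μ[(fun ω => u ω * m ω) | my] =ᵐ[μ] fun ω => u ω * u ω := by
      have := condExp_mul_of_stronglyMeasurable_left (m := my) (μ := μ)
        stronglyMeasurable_condExp hImu hmint
      exact this
    calc ∫ ω, u ω * m ω ∂μ = ∫ ω, (μ[(fun ω => u ω * m ω) | my]) ω ∂μ :=
          (integral_condExp hle).symm
      _ = ∫ ω, u ω * u ω ∂μ := integral_congr_ae h1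
      _ = ∫ ω, u ω ^ 2 ∂μ := by congr 1; funext ω; ring
  -- expansion
  have hexp : ∫ ω, (a * m ω - b - u ω) ^ 2 ∂μ
      = ∫ ω, (a * m ω - b) ^ 2 ∂μ + (1 - 2 * a) * ∫ ω, u ω ^ 2 ∂μ := by
    have hpt : (fun ω => (a * m ω - b - u ω) ^ 2)
        = fun ω => ((a * m ω - b) ^ 2 - 2 * ((a * m ω - b) * u ω)) + u ω ^ 2 := by
      funext ω; ring
    have hI2Xu : Integrable (fun ω => 2 * ((a * m ω - b) * u ω)) μ := hIXu.const_mul 2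
    have hI12 : Integrable (fun ω => (a * m ω - b) ^ 2 - 2 * ((a * m ω - b) * u ω)) μ :=
      hIX2.sub hI2Xu
    rw [hpt, integral_add hI12 hIu2, integral_sub hIX2 hI2Xu, integral_const_mul]
    have hXu : ∫ ω, (a * m ω - b) * u ω ∂μ = a * ∫ ω, u ω ^ 2 ∂μ := by
      have hpt2 : (fun ω => (a * m ω - b) * u ω)
          = fun ω => a * (u ω * m ω) - b * u ω := by funext ω; ring
      rw [hpt2, integral_sub (hImu.const_mul a) (huint.const_mul b),
        integral_const_mul, integral_const_mul, hEmu, hEu]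
      ring
    rw [hXu]; ring
  have hu2nonneg : 0 ≤ ∫ ω, u ω ^ 2 ∂μ := integral_nonneg fun ω => sq_nonneg _
  have hγnonneg : 0 ≤ ∫ ω, (γ (m ω)) ^ 2 ∂μ := integral_nonneg fun ω => sq_nonneg _
  rw [hL1, hexp]
  have h0 : ∫ ω, ((0 : ℝ)) ^ 2 ∂μ = 0 := by simp
  rw [h0]
  nlinarith
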